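/- An NBUE life distribution has finite moments of all orders. -/

import Mathlib

open MeasureTheory Set Filter

/-- If `X` is a nonnegative random variable with NBUE distribution and mean `μ > 0`,
then `X` has finite moments of all orders `r > 0`. -/
theorem nbue_finite_moments
    {Ω : Type*} [MeasurableSpace Ω] (P : Measure Ω) [IsProbabilityMeasure P]
    (X : Ω → ℝ) (hXm : Measurable X) (hX0 : ∀ ω, 0 ≤ X ω)
    (hint : Integrable X P) (μ : ℝ) (hμdef : μ = ∫ ω, X ω ∂P) (hμ : 0 < μ)
    (hNBUE : ∀ t ≥ (0:ℝ),
      ∫ x in Ioi t, (P {ω | x < X ω}).toReal ≤ μ * (P {ω | t < X ω}).toReal) :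
    ∀ r : ℝ, 0 < r → Integrable (fun ω => X ω ^ r) P := by
  intro r hr
  set F : ℝ → ℝ := fun t => (P {ω | t < X ω}).toReal with hFdef
  have hmono : Antitone (fun t => P {ω | t < X ω}) := by
    intro s t hst
    exact measure_mono (fun ω hω => lt_of_le_of_lt hst hω)
  have hFanti : Antitone F := by
    intro s t hst
    exact ENNReal.toReal_mono (measure_ne_top _ _) (hmono hst)
  have hFnn : ∀ t, 0 ≤ F t := fun t => ENNReal.toReal_nonneg
  have hF1 : ∀ t, F t ≤ 1 := by
    intro t
    have := measure_mono (μ := P) (Set.subset_univ {ω | t < X ω})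
    simpa [hFdef] using ENNReal.toReal_mono (by simp) this
  have hmeas : Measurable (fun t : ℝ => P {ω | t < X ω}) := hmono.measurable
  -- finiteness of the tail lintegral
  have hL : ∫⁻ t in Ioi 0, P {ω | t < X ω} < ⊤ := by
    rw [← lintegral_eq_lintegral_meas_lt P (ae_of_all _ hX0) hXm.aemeasurable]
    exact hint.lintegral_lt_top
  -- integrability of F on Ioi t for t ≥ 0
  have hFint : ∀ t : ℝ, 0 ≤ t → IntegrableOn F (Ioi t) := by
    intro t ht
    refine integrable_toReal_of_lintegral_ne_top (hmeas.aemeasurable) ?_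
    have : ∫⁻ x in Ioi t, P {ω | x < X ω} ≤ ∫⁻ x in Ioi 0, P {ω | x < X ω} :=
      lintegral_mono_set (fun x hx => lt_of_le_of_lt ht hx)
    exact (lt_of_le_of_lt this hL).ne
  -- key halving step
  have hhalf : ∀ t : ℝ, 0 ≤ t → F (t + 2 * μ) ≤ F t / 2 := by
    intro t ht
    have hIoc : IntegrableOn F (Ioc t (t + 2 * μ)) :=
      (hFint t ht).mono_set Ioc_subset_Ioi_self
    have h1 : (2 * μ) * F (t + 2 * μ) ≤ ∫ x in Ioc t (t + 2 * μ), F x := by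
      have hconst : ∫ x in Ioc t (t + 2 * μ), F (t + 2 * μ) = (2 * μ) * F (t + 2 * μ) := by
        rw [setIntegral_const, Real.volume_real_Ioc_of_le (by linarith), smul_eq_mul]
        rw [show t + 2 * μ - t = 2 * μ by ring]
      rw [← hconst]
      refine setIntegral_mono_on (integrableOn_const ?_) hIoc measurableSet_Ioc ?_
      · rw [Real.volume_Ioc]; exact ENNReal.ofReal_ne_top
      · intro x hx
        exact hFanti hx.2
    have h2 : ∫ x in Ioc t (t + 2 * μ), F x ≤ ∫ x in Ioi t, F x := by
      refine setIntegral_mono_set (hFint t ht) (ae_of_all _ (fun x => hFnn x)) ?_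
      exact HasSubset.Subset.eventuallyLE Ioc_subset_Ioi_self
    have h3 := hNBUE t ht
    have : (2 * μ) * F (t + 2 * μ) ≤ μ * F t := le_trans h1 (le_trans h2 h3)
    nlinarith
  -- geometric decay along multiples of 2μ
  have hgeo : ∀ n : ℕ, F (2 * μ * n) ≤ (1 / 2) ^ n := by
    intro n
    induction n with
    | zero => simpa using hF1 0
    | succ n ih =>
      have h0 : (0:ℝ) ≤ 2 * μ * n := by positivity
      have := hhalf (2 * μ * n) h0
      have heq : 2 * μ * (n : ℝ) + 2 * μ = 2 * μ * ((n : ℕ) + 1 : ℕ) := by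
        push_cast; ring
      rw [heq] at this
      calc F (2 * μ * ((n:ℕ) + 1 : ℕ)) ≤ F (2 * μ * n) / 2 := this
        _ ≤ (1 / 2) ^ n / 2 := by linarith
        _ = (1 / 2) ^ (n + 1) := by ring
  -- exponential tail bound
  set b : ℝ := Real.log 2 / (2 * μ) with hbdef
  have hb : 0 < b := div_pos (Real.log_pos (by norm_num)) (by linarith)
  have htail : ∀ t : ℝ, 0 ≤ t → F t ≤ 2 * Real.exp (-b * t) := by
    intro t ht
    set n : ℕ := ⌊t / (2 * μ)⌋₊ with hn
    have h2μ : (0:ℝ) < 2 * μ := by linarith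
    have hn1 : 2 * μ * n ≤ t := by
      have := Nat.floor_le (by positivity : (0:ℝ) ≤ t / (2 * μ))
      calc 2 * μ * (n:ℝ) ≤ 2 * μ * (t / (2 * μ)) := by
            apply mul_le_mul_of_nonneg_left this (le_of_lt h2μ)
        _ = t := by field_simp
    have hn2 : t < 2 * μ * (n + 1) := by
      have := Nat.lt_floor_add_one (t / (2 * μ))
      calc t = 2 * μ * (t / (2 * μ)) := by field_simp
        _ < 2 * μ * (n + 1) := by
            apply mul_lt_mul_of_pos_left this h2μ
    have h1 : F t ≤ (1 / 2 : ℝ) ^ n := le_trans (hFanti hn1) (hgeo n)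
    have h2 : ((1 / 2 : ℝ)) ^ (n + 1) ≤ Real.exp (-b * t) := by
      have hx : -b * t ≥ -(Real.log 2) * (n + 1) := by
        have : b * t ≤ Real.log 2 * (n + 1) := by
          rw [hbdef]
          rw [div_mul_eq_mul_div, div_le_iff₀ h2μ]
          calc Real.log 2 * t ≤ Real.log 2 * (2 * μ * (n + 1)) := by
                apply mul_le_mul_of_nonneg_left (le_of_lt hn2)
                  (le_of_lt (Real.log_pos (by norm_num)))
            _ = Real.log 2 * (n + 1) * (2 * μ) := by ring
        linarith
      calc ((1 / 2 : ℝ)) ^ (n + 1) = Real.exp (-(Real.log 2) * ((n:ℝ) + 1)) := by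
            rw [show (-(Real.log 2) * ((n:ℝ) + 1)) = ((n + 1 : ℕ) : ℝ) * (-Real.log 2) by
              push_cast; ring]
            rw [Real.exp_nat_mul, Real.exp_neg, Real.exp_log (by norm_num : (0:ℝ) < 2)]
            norm_num
        _ ≤ Real.exp (-b * t) := Real.exp_le_exp.2 hx
    calc F t ≤ (1 / 2 : ℝ) ^ n := h1
      _ = 2 * (1 / 2 : ℝ) ^ (n + 1) := by ring
      _ ≤ 2 * Real.exp (-b * t) := by linarith
  -- conclude integrability of X^r
  constructor
  · exact (hXm.pow_const r).aestronglyMeasurable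
  · have hnn : (0:Ω → ℝ) ≤ᵐ[P] fun ω => X ω ^ r :=
      ae_of_all _ (fun ω => by simpa using Real.rpow_nonneg (hX0 ω) r)
    rw [hasFiniteIntegral_iff_ofReal hnn]
    rw [lintegral_rpow_eq_lintegral_meas_lt_mul P (ae_of_all _ hX0) hXm.aemeasurable hr]
    refine ENNReal.mul_lt_top ENNReal.ofReal_lt_top ?_
    -- comparison function
    set g : ℝ → ℝ := fun t => (2 * Real.exp (-b * t)) * t ^ (r - 1) with hgdef
    have hgint : IntegrableOn g (Ioi 0) := by
      have h := integrableOn_rpow_mul_exp_neg_mul_rpow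
        (show (-1:ℝ) < r - 1 by linarith) zero_lt_one hb
      have h2 : IntegrableOn (fun x : ℝ => x ^ (r - 1) * Real.exp (-b * x)) (Ioi 0) := by
        refine h.congr_fun (fun x hx => ?_) measurableSet_Ioi
        simp only [Real.rpow_one]
      have h3 : IntegrableOn (fun x : ℝ => 2 * (x ^ (r - 1) * Real.exp (-b * x))) (Ioi 0) :=
        h2.const_mul 2
      refine h3.congr_fun (fun x _ => ?_) measurableSet_Ioi
      rw [hgdef]; ring
    have hbound : ∫⁻ t in Ioi 0, P {ω | t < X ω} * ENNReal.ofReal (t ^ (r - 1))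
        ≤ ∫⁻ t in Ioi 0, ENNReal.ofReal (g t) := by
      refine setLIntegral_mono (by
        apply ENNReal.measurable_ofReal.comp
        apply Measurable.mul
        · exact (Real.continuous_exp.comp (continuous_const.mul continuous_id)).measurable.const_mul 2
        · exact measurable_id.pow_const (r - 1)) ?_
      intro t ht
      have htail' := htail t (le_of_lt ht)
      have h1 : P {ω | t < X ω} ≤ ENNReal.ofReal (2 * Real.exp (-b * t)) := by
        rw [← ENNReal.ofReal_toReal (measure_ne_top P {ω | t < X ω})]
        exact ENNReal.ofReal_le_ofReal htail'
      calc P {ω | t < X ω} * ENNReal.ofReal (t ^ (r - 1))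
          ≤ ENNReal.ofReal (2 * Real.exp (-b * t)) * ENNReal.ofReal (t ^ (r - 1)) :=
            mul_le_mul_left h1 _
        _ = ENNReal.ofReal (g t) := by
            rw [← ENNReal.ofReal_mul (by positivity)]
    exact lt_of_le_of_lt hbound hgint.lintegral_lt_top
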